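/- Let d ≥ 3 be an integer and define Q(δ) = (K(δ) − 2)^{−(d−1)/4} (K(δ) + 2)^{(d+1)/4} for δ ∈ (0,1), where K(δ) = 2/(1 − (1−δ)^{2/(d−1)}). Then Q is convex on (0,1) and attains its global minimum uniquely at δ₀ = 1 − (1 − 1/d)^{(d−1)/2}; equivalently, K(δ₀) = 2d. -/

import Mathlib

open Real Set

/-- `K(δ) = 2/(1 − (1−δ)^{2/(d−1)})` (real power). -/
noncomputable def Kfun (d : ℕ) (δ : ℝ) : ℝ :=
  2 / (1 - (1 - δ) ^ (2 / ((d : ℝ) - 1)))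

/-- `Q(δ) = (K(δ) − 2)^{−(d−1)/4} (K(δ) + 2)^{(d+1)/4}` (real powers). -/
noncomputable def Qfun (d : ℕ) (δ : ℝ) : ℝ :=
  (Kfun d δ - 2) ^ (-(((d : ℝ) - 1) / 4)) * (Kfun d δ + 2) ^ (((d : ℝ) + 1) / 4)

/-- The minimizer `δ₀ = 1 − (1 − 1/d)^{(d−1)/2}`. -/
noncomputable def delta0 (d : ℕ) : ℝ :=
  1 - (1 - 1 / (d : ℝ)) ^ (((d : ℝ) - 1) / 2)

noncomputable def aa (d : ℕ) : ℝ := 2 / ((d : ℝ) - 1)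
noncomputable def tt (d : ℕ) (δ : ℝ) : ℝ := (1 - δ) ^ (aa d)
noncomputable def DD (d : ℕ) (δ : ℝ) : ℝ := 2 * (1 - δ) * (2 - tt d δ) * (1 - tt d δ)
noncomputable def GG (d : ℕ) (δ : ℝ) : ℝ := (2 - (2 + aa d) * tt d δ) / DD d δ
noncomputable def EE (a t : ℝ) : ℝ :=
  8 - (20 + 8*a - 4*a^2) * t + (16 + 14*a) * t^2 - 2*(a+1)*(a+2)*t^3

section basic
variable {d : ℕ} {δ : ℝ}

lemma hdr (hd : 3 ≤ d) : (2:ℝ) ≤ (d:ℝ) - 1 := by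
  have : (3:ℝ) ≤ d := by exact_mod_cast hd
  linarith

lemma aa_pos (hd : 3 ≤ d) : 0 < aa d := by
  have := hdr hd; unfold aa; positivity

lemma aa_le_one (hd : 3 ≤ d) : aa d ≤ 1 := by
  have h := hdr hd; unfold aa
  rw [div_le_one (by linarith)]; linarith

lemma had (hd : 3 ≤ d) : aa d * ((d:ℝ) - 1) = 2 := by
  have h := hdr hd; rw [aa, div_mul_cancel₀ _ (by linarith : (d:ℝ) - 1 ≠ 0)]

lemma u_mem (hδ : δ ∈ Ioo (0:ℝ) 1) : (1 - δ) ∈ Ioo (0:ℝ) 1 := by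
  obtain ⟨h1, h2⟩ := hδ; constructor <;> linarith

lemma tt_mem (hd : 3 ≤ d) (hδ : δ ∈ Ioo (0:ℝ) 1) : tt d δ ∈ Ioo (0:ℝ) 1 := by
  obtain ⟨h1, h2⟩ := u_mem hδ
  exact ⟨Real.rpow_pos_of_pos h1 _,
    Real.rpow_lt_one h1.le h2 (aa_pos hd)⟩

lemma Kfun_eq : Kfun d δ = 2 / (1 - tt d δ) := rfl

lemma Kfun_sub_two (hd : 3 ≤ d) (hδ : δ ∈ Ioo (0:ℝ) 1) : Kfun d δ - 2 = 2 * tt d δ / (1 - tt d δ) := by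
  obtain ⟨h1, h2⟩ := tt_mem hd hδ
  have h3 : (1:ℝ) - tt d δ ≠ 0 := by linarith
  rw [Kfun_eq]; field_simp; ring

lemma Kfun_add_two (hd : 3 ≤ d) (hδ : δ ∈ Ioo (0:ℝ) 1) : Kfun d δ + 2 = 2 * (2 - tt d δ) / (1 - tt d δ) := by
  obtain ⟨h1, h2⟩ := tt_mem hd hδ
  have h3 : (1:ℝ) - tt d δ ≠ 0 := by linarith
  rw [Kfun_eq]; field_simp; ring

lemma Kfun_sub_two_pos (hd : 3 ≤ d) (hδ : δ ∈ Ioo (0:ℝ) 1) : 0 < Kfun d δ - 2 := by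
  obtain ⟨h1, h2⟩ := tt_mem hd hδ
  rw [Kfun_sub_two hd hδ]
  have h3 : (0:ℝ) < 1 - tt d δ := by linarith
  positivity

lemma Kfun_add_two_pos (hd : 3 ≤ d) (hδ : δ ∈ Ioo (0:ℝ) 1) : 0 < Kfun d δ + 2 := by
  obtain ⟨h1, h2⟩ := tt_mem hd hδ
  rw [Kfun_add_two hd hδ]
  have h3 : (0:ℝ) < 1 - tt d δ := by linarith
  have h4 : (0:ℝ) < 2 - tt d δ := by linarith
  positivity

lemma Qfun_pos (hd : 3 ≤ d) (hδ : δ ∈ Ioo (0:ℝ) 1) : 0 < Qfun d δ :=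
  mul_pos (Real.rpow_pos_of_pos (Kfun_sub_two_pos hd hδ) _)
    (Real.rpow_pos_of_pos (Kfun_add_two_pos hd hδ) _)

lemma DD_pos (hd : 3 ≤ d) (hδ : δ ∈ Ioo (0:ℝ) 1) : 0 < DD d δ := by
  obtain ⟨h1, h2⟩ := tt_mem hd hδ
  obtain ⟨h3, h4⟩ := u_mem hδ
  have : 0 < 2 - tt d δ := by linarith
  have : 0 < 1 - tt d δ := by linarith
  unfold DD; positivity

end basic

section deriv
variable {d : ℕ} {δ : ℝ}

lemma tt_hasDeriv (hd : 3 ≤ d) (hδ : δ ∈ Ioo (0:ℝ) 1) :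
    HasDerivAt (tt d) ((-1) * aa d * (1 - δ) ^ (aa d - 1)) δ := by
  obtain ⟨h1, h2⟩ := u_mem hδ
  have h0 : HasDerivAt (fun x : ℝ => 1 - x) (-1) δ := (hasDerivAt_id δ).const_sub 1
  exact h0.rpow_const (Or.inl h1.ne')

lemma Kfun_hasDeriv (hd : 3 ≤ d) (hδ : δ ∈ Ioo (0:ℝ) 1) :
    HasDerivAt (Kfun d)
      ((0 * (1 - tt d δ) - 2 * (aa d * (1 - δ) ^ (aa d - 1))) / (1 - tt d δ)^2) δ := by
  obtain ⟨h1, h2⟩ := tt_mem hd hδ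
  have hne : 1 - tt d δ ≠ 0 := by linarith
  have h3 : HasDerivAt (fun x => 1 - tt d x) (aa d * (1 - δ) ^ (aa d - 1)) δ := by
    have := (tt_hasDeriv hd hδ).const_sub 1
    exact this.congr_deriv (by ring)
  exact (hasDerivAt_const δ (2:ℝ)).div h3 hne

lemma GG_eq_deriv (hd : 3 ≤ d) (hδ : δ ∈ Ioo (0:ℝ) 1) :
    ((0 * (1 - tt d δ) - 2 * (aa d * (1 - δ) ^ (aa d - 1))) / (1 - tt d δ)^2) *
        (-(((d : ℝ) - 1) / 4) / (Kfun d δ - 2) + (((d : ℝ) + 1) / 4) / (Kfun d δ + 2))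
      = GG d δ := by
  obtain ⟨ht0, ht1⟩ := tt_mem hd hδ
  obtain ⟨hu0, hu1⟩ := u_mem hδ
  have ha := aa_pos hd
  have hsu : (1 - δ) ^ (aa d - 1) = tt d δ / (1 - δ) := by
    rw [Real.rpow_sub hu0, Real.rpow_one]; rfl
  have hdd : (d:ℝ) = 2 / aa d + 1 := by
    have h := had hd; field_simp at h ⊢; linarith
  rw [Kfun_sub_two hd hδ, Kfun_add_two hd hδ, hsu, hdd]
  unfold GG DD
  have h2t : (2:ℝ) - tt d δ ≠ 0 := by linarith
  have h1t : (1:ℝ) - tt d δ ≠ 0 := by linarith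
  field_simp
  ring

lemma Qfun_hasDeriv (hd : 3 ≤ d) (hδ : δ ∈ Ioo (0:ℝ) 1) :
    HasDerivAt (Qfun d) (Qfun d δ * GG d δ) δ := by
  have hK2 := Kfun_sub_two_pos hd hδ
  have hKp := Kfun_add_two_pos hd hδ
  have hKd := Kfun_hasDeriv hd hδ
  have h7 := (hKd.sub_const 2).rpow_const (p := -(((d : ℝ) - 1) / 4)) (Or.inl hK2.ne')
  have h8 := (hKd.add_const 2).rpow_const (p := (((d : ℝ) + 1) / 4)) (Or.inl hKp.ne')
  have h9 := h7.mul h8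
  refine h9.congr_deriv (Eq.symm ?_)
  rw [Real.rpow_sub_one hK2.ne', Real.rpow_sub_one hKp.ne']
  rw [← GG_eq_deriv hd hδ]
  unfold Qfun
  have h2 : Kfun d δ - 2 ≠ 0 := hK2.ne'
  have hp2 : Kfun d δ + 2 ≠ 0 := hKp.ne'
  generalize (0 * (1 - tt d δ) - 2 * (aa d * (1 - δ) ^ (aa d - 1))) / (1 - tt d δ)^2 = k
  generalize hK : Kfun d δ = X
  rw [hK] at h2 hp2
  field_simp
end deriv

lemma EE_pos {a t : ℝ} (ha : 0 < a) (ha1 : a ≤ 1) (ht : 0 ≤ t) (ht1 : t ≤ 1) :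
    0 < EE a t := by
  unfold EE
  nlinarith [sq_nonneg (1-t), sq_nonneg (a*(1-t)), sq_nonneg (a-t), sq_nonneg t, sq_nonneg a,
    mul_pos ha ha, sq_nonneg (a*t), sq_nonneg (2-2*t-a*t), mul_nonneg (mul_nonneg ht ht) ht,
    sq_nonneg (1-a*t), mul_nonneg (sq_nonneg (1-t)) ht, mul_nonneg (sq_nonneg (1-t)) ha.le]

section deriv2
variable {d : ℕ} {δ : ℝ}

lemma GG_hasDeriv (hd : 3 ≤ d) (hδ : δ ∈ Ioo (0:ℝ) 1) :
    HasDerivAt (GG d) (EE (aa d) (tt d δ) / (DD d δ)^2) δ := by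
  obtain ⟨ht0, ht1⟩ := tt_mem hd hδ
  obtain ⟨hu0, hu1⟩ := u_mem hδ
  have ht' := tt_hasDeriv hd hδ
  have hsu : (1 - δ) ^ (aa d - 1) = tt d δ / (1 - δ) := by
    rw [Real.rpow_sub hu0, Real.rpow_one]; rfl
  have hN : HasDerivAt (fun x => 2 - (2 + aa d) * tt d x)
      (-((2 + aa d) * ((-1) * aa d * (1 - δ) ^ (aa d - 1)))) δ :=
    (ht'.const_mul (2 + aa d)).const_sub 2
  have h1 : HasDerivAt (fun x : ℝ => 2 * (1 - x)) (2 * (-1)) δ :=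
    ((hasDerivAt_id δ).const_sub 1).const_mul 2
  have h2 : HasDerivAt (fun x => 2 - tt d x) (-((-1) * aa d * (1 - δ) ^ (aa d - 1))) δ :=
    ht'.const_sub 2
  have h3 : HasDerivAt (fun x => 1 - tt d x) (-((-1) * aa d * (1 - δ) ^ (aa d - 1))) δ :=
    ht'.const_sub 1
  have hD : HasDerivAt (DD d)
      ((2 * (-1) * (2 - tt d δ) + 2 * (1 - δ) * (-((-1) * aa d * (1 - δ) ^ (aa d - 1)))) *
          (1 - tt d δ) +
        2 * (1 - δ) * (2 - tt d δ) * (-((-1) * aa d * (1 - δ) ^ (aa d - 1)))) δ :=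
    (h1.mul h2).mul h3
  have h := hN.div hD (DD_pos hd hδ).ne'
  have key : EE (aa d) (tt d δ) =
      -((2 + aa d) * ((-1) * aa d * (1 - δ) ^ (aa d - 1))) * DD d δ -
        (2 - (2 + aa d) * tt d δ) *
          ((2 * (-1) * (2 - tt d δ) + 2 * (1 - δ) * (-((-1) * aa d * (1 - δ) ^ (aa d - 1)))) *
              (1 - tt d δ) +
            2 * (1 - δ) * (2 - tt d δ) * (-((-1) * aa d * (1 - δ) ^ (aa d - 1)))) := by
    rw [hsu]
    unfold EE DD
    field_simp
    ring
  rw [show EE (aa d) (tt d δ) / (DD d δ)^2 = _ from by rw [key]]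
  exact h

lemma Qfun_hasDeriv2 (hd : 3 ≤ d) (hδ : δ ∈ Ioo (0:ℝ) 1) :
    HasDerivAt (fun x => Qfun d x * GG d x)
      (Qfun d δ * (GG d δ ^ 2 + EE (aa d) (tt d δ) / (DD d δ)^2)) δ := by
  have h := (Qfun_hasDeriv hd hδ).mul (GG_hasDeriv hd hδ)
  exact h.congr_deriv (by ring)

lemma Qfun_convexOn (hd : 3 ≤ d) : ConvexOn ℝ (Ioo (0:ℝ) 1) (Qfun d) := by
  apply convexOn_of_hasDerivWithinAt2_nonneg (convex_Ioo 0 1)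
    (f' := fun x => Qfun d x * GG d x)
    (f'' := fun x => Qfun d x * (GG d x ^ 2 + EE (aa d) (tt d x) / (DD d x)^2))
  · intro x hx; exact (Qfun_hasDeriv hd hx).continuousAt.continuousWithinAt
  · rw [interior_Ioo]; intro x hx; exact (Qfun_hasDeriv hd hx).hasDerivWithinAt
  · rw [interior_Ioo]; intro x hx; exact (Qfun_hasDeriv2 hd hx).hasDerivWithinAt
  · rw [interior_Ioo]; intro x hx
    obtain ⟨ht0, ht1⟩ := tt_mem hd hx
    have hE := EE_pos (aa_pos hd) (aa_le_one hd) ht0.le ht1.le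
    have hD := DD_pos hd hx
    have hQ := Qfun_pos hd hx
    positivity
end deriv2

section final
variable {d : ℕ}

lemma u0_mem (hd : 3 ≤ d) : (1 - 1/(d:ℝ)) ^ (((d:ℝ) - 1)/2) ∈ Ioo (0:ℝ) 1 := by
  have hd3 : (3:ℝ) ≤ d := by exact_mod_cast hd
  have hb0 : (0:ℝ) < 1 - 1/(d:ℝ) := by
    rw [sub_pos, div_lt_one (by linarith)]; linarith
  have hb1 : 1 - 1/(d:ℝ) < 1 := by
    have : (0:ℝ) < 1/(d:ℝ) := by positivity
    linarith
  exact ⟨Real.rpow_pos_of_pos hb0 _, Real.rpow_lt_one hb0.le hb1 (by linarith)⟩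

lemma delta0_mem (hd : 3 ≤ d) : delta0 d ∈ Ioo (0:ℝ) 1 := by
  obtain ⟨h1, h2⟩ := u0_mem hd
  unfold delta0; constructor <;> [linarith; linarith]

lemma tt_delta0 (hd : 3 ≤ d) : tt d (delta0 d) = 1 - 1/(d:ℝ) := by
  have hd3 : (3:ℝ) ≤ d := by exact_mod_cast hd
  have hb0 : (0:ℝ) < 1 - 1/(d:ℝ) := by
    rw [sub_pos, div_lt_one (by linarith)]; linarith
  unfold tt delta0
  have h1 : ((d:ℝ) - 1) ≠ 0 := by linarith
  rw [sub_sub_cancel, ← Real.rpow_mul hb0.le,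
    show (((d:ℝ) - 1)/2) * aa d = 1 by unfold aa; field_simp, Real.rpow_one]

lemma Kfun_delta0 (hd : 3 ≤ d) : Kfun d (delta0 d) = 2 * d := by
  have hd3 : (3:ℝ) ≤ d := by exact_mod_cast hd
  rw [Kfun_eq, tt_delta0 hd, sub_sub_cancel]
  field_simp

lemma GG_neg (hd : 3 ≤ d) {δ : ℝ} (hδ : δ ∈ Ioo (0:ℝ) 1) (hlt : δ < delta0 d) :
    GG d δ < 0 := by
  have hd3 : (3:ℝ) ≤ d := by exact_mod_cast hd
  have hδ0 := delta0_mem hd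
  have ht : tt d (delta0 d) < tt d δ :=
    Real.rpow_lt_rpow (by linarith [hδ0.2]) (by linarith) (aa_pos hd)
  rw [tt_delta0 hd] at ht
  have hkey : (2 + aa d) * (1 - 1/(d:ℝ)) = 2 := by
    have h1 : ((d:ℝ) - 1) ≠ 0 := by linarith
    have h2 : (d:ℝ) ≠ 0 := by linarith
    unfold aa; field_simp; ring
  have ha := aa_pos hd
  have hN : 2 - (2 + aa d) * tt d δ < 0 := by
    have := mul_lt_mul_of_pos_left ht (show (0:ℝ) < 2 + aa d by linarith)
    nlinarith
  exact div_neg_of_neg_of_pos hN (DD_pos hd hδ)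

lemma GG_pos (hd : 3 ≤ d) {δ : ℝ} (hδ : δ ∈ Ioo (0:ℝ) 1) (hlt : delta0 d < δ) :
    0 < GG d δ := by
  have hd3 : (3:ℝ) ≤ d := by exact_mod_cast hd
  have hδ0 := delta0_mem hd
  have ht : tt d δ < tt d (delta0 d) :=
    Real.rpow_lt_rpow (by linarith [hδ.2]) (by linarith) (aa_pos hd)
  rw [tt_delta0 hd] at ht
  have hkey : (2 + aa d) * (1 - 1/(d:ℝ)) = 2 := by
    have h1 : ((d:ℝ) - 1) ≠ 0 := by linarith
    have h2 : (d:ℝ) ≠ 0 := by linarith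
    unfold aa; field_simp; ring
  have ha := aa_pos hd
  have hN : 0 < 2 - (2 + aa d) * tt d δ := by
    have := mul_lt_mul_of_pos_left ht (show (0:ℝ) < 2 + aa d by linarith)
    nlinarith
  exact div_pos hN (DD_pos hd hδ)

lemma Qfun_anti (hd : 3 ≤ d) : StrictAntiOn (Qfun d) (Ioc (0:ℝ) (delta0 d)) := by
  have hδ0 := delta0_mem hd
  have hsub : Ioc (0:ℝ) (delta0 d) ⊆ Ioo (0:ℝ) 1 := fun x hx =>
    ⟨hx.1, lt_of_le_of_lt hx.2 hδ0.2⟩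
  apply strictAntiOn_of_deriv_neg (convex_Ioc _ _)
  · exact fun x hx => (Qfun_hasDeriv hd (hsub hx)).continuousAt.continuousWithinAt
  · rw [interior_Ioc]
    intro x hx
    have hx1 : x ∈ Ioo (0:ℝ) 1 := ⟨hx.1, lt_trans hx.2 hδ0.2⟩
    rw [(Qfun_hasDeriv hd hx1).deriv]
    exact mul_neg_of_pos_of_neg (Qfun_pos hd hx1) (GG_neg hd hx1 hx.2)

lemma Qfun_mono (hd : 3 ≤ d) : StrictMonoOn (Qfun d) (Ico (delta0 d) 1) := by
  have hδ0 := delta0_mem hd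
  have hsub : Ico (delta0 d) 1 ⊆ Ioo (0:ℝ) 1 := fun x hx =>
    ⟨lt_of_lt_of_le hδ0.1 hx.1, hx.2⟩
  apply strictMonoOn_of_deriv_pos (convex_Ico _ _)
  · exact fun x hx => (Qfun_hasDeriv hd (hsub hx)).continuousAt.continuousWithinAt
  · rw [interior_Ico]
    intro x hx
    have hx1 : x ∈ Ioo (0:ℝ) 1 := ⟨lt_trans hδ0.1 hx.1, hx.2⟩
    rw [(Qfun_hasDeriv hd hx1).deriv]
    exact mul_pos (Qfun_pos hd hx1) (GG_pos hd hx1 hx.1)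

end final

/-- for `d ≥ 3`, `Q` is convex on `(0,1)` and attains its global minimum
over `(0,1)` uniquely at `δ₀ = 1 − (1 − 1/d)^{(d−1)/2}`; equivalently `K(δ₀) = 2d`. -/
theorem Qfun_convex_and_unique_min (d : ℕ) (hd : 3 ≤ d) :
    delta0 d ∈ Set.Ioo (0 : ℝ) 1 ∧
    ConvexOn ℝ (Set.Ioo 0 1) (Qfun d) ∧
    (∀ δ ∈ Set.Ioo (0 : ℝ) 1, Qfun d (delta0 d) ≤ Qfun d δ) ∧
    (∀ δ ∈ Set.Ioo (0 : ℝ) 1, δ ≠ delta0 d → Qfun d (delta0 d) < Qfun d δ) ∧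
    Kfun d (delta0 d) = 2 * d := by
  have hδ0 := delta0_mem hd
  have hstrict : ∀ δ ∈ Set.Ioo (0:ℝ) 1, δ ≠ delta0 d → Qfun d (delta0 d) < Qfun d δ := by
    intro δ hδ hne
    rcases lt_or_gt_of_ne hne with h | h
    · exact Qfun_anti hd ⟨hδ.1, h.le⟩ ⟨hδ0.1, le_refl _⟩ h
    · exact Qfun_mono hd ⟨le_refl _, hδ0.2⟩ ⟨h.le, hδ.2⟩ h
  refine ⟨hδ0, Qfun_convexOn hd, ?_, hstrict, Kfun_delta0 hd⟩
  intro δ hδ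
  by_cases hne : δ = delta0 d
  · rw [hne]
  · exact (hstrict δ hδ hne).le
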